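/- Let h(z) = Wz + b with W ∈ ℝ^{n×n} having largest singular value σ₁, and let u, v ∈ ℝⁿ be unit vectors. If ‖h(u) − e_y‖ < δ and ‖h(v) − e_{y'}‖ < δ for distinct standard basis vectors e_y ≠ e_{y'} and 0 < δ < √2/2, then ⟨u, v⟩ < 1 − (√2 − 2δ)²/(2σ₁²). -/
import Mathlib


open scoped RealInnerProductSpace

/-- If the affine images `h(u), h(v)` are `δ`-close to distinct standard basis
vectors, then the unit vectors `u, v` are separated:
`⟪u,v⟫ < 1 - (√2 - 2δ)²/(2σ₁²)`. -/
theorem separated_of_close_to_distinct_basis {n : ℕ}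
    (W : Matrix (Fin n) (Fin n) ℝ)
    (b : EuclideanSpace ℝ (Fin n))
    (σ1 : ℝ) (hσ1 : 0 < σ1)
    (hup : ∀ z : EuclideanSpace ℝ (Fin n), ‖Matrix.toEuclideanLin W z‖ ≤ σ1 * ‖z‖)
    (h : EuclideanSpace ℝ (Fin n) → EuclideanSpace ℝ (Fin n))
    (hh : ∀ z, h z = Matrix.toEuclideanLin W z + b)
    (u v : EuclideanSpace ℝ (Fin n)) (hu : ‖u‖ = 1) (hv : ‖v‖ = 1)
    (y y' : Fin n) (hyy' : y ≠ y')
    (δ : ℝ) (hδ0 : 0 < δ) (hδ : δ < Real.sqrt 2 / 2)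
    (hu' : ‖h u - EuclideanSpace.single y (1 : ℝ)‖ < δ)
    (hv' : ‖h v - EuclideanSpace.single y' (1 : ℝ)‖ < δ) :
    ⟪u, v⟫ < 1 - (Real.sqrt 2 - 2 * δ) ^ 2 / (2 * σ1 ^ 2) := by
  set ey := EuclideanSpace.single y (1 : ℝ)
  set ey' := EuclideanSpace.single y' (1 : ℝ)
  have hinner : ⟪ey, ey'⟫ = 0 := by
    simp [ey, ey', EuclideanSpace.inner_single_left, EuclideanSpace.single_apply,
      hyy'.symm]
  have hney : ‖ey‖ = 1 := by simp [ey]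
  have hney' : ‖ey'‖ = 1 := by simp [ey']
  have hsq : ‖ey - ey'‖ ^ 2 = 2 := by
    rw [norm_sub_sq_real, hinner, hney, hney']; ring
  have hee : ‖ey - ey'‖ = Real.sqrt 2 := by
    rw [← hsq]
    exact (Real.sqrt_sq (norm_nonneg _)).symm
  -- h u - h v = W (u - v)
  have hdiff : h u - h v = Matrix.toEuclideanLin W (u - v) := by
    rw [hh, hh, map_sub]; abel
  have htri : Real.sqrt 2 - 2 * δ < ‖h u - h v‖ := by
    have : ‖ey - ey'‖ ≤ ‖h u - ey‖ + ‖h u - h v‖ + ‖h v - ey'‖ := by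
      have := norm_sub_le_norm_sub_add_norm_sub (ey) (h u) (ey')
      calc ‖ey - ey'‖ ≤ ‖ey - h u‖ + ‖h u - ey'‖ := norm_sub_le_norm_sub_add_norm_sub _ _ _
        _ ≤ ‖ey - h u‖ + (‖h u - h v‖ + ‖h v - ey'‖) := by
            linarith [norm_sub_le_norm_sub_add_norm_sub (h u) (h v) ey']
        _ = ‖h u - ey‖ + ‖h u - h v‖ + ‖h v - ey'‖ := by rw [norm_sub_rev]; ring
    rw [hee] at this
    linarith
  have hWd : ‖h u - h v‖ ≤ σ1 * ‖u - v‖ := by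
    rw [hdiff]; exact hup _
  have hd : (Real.sqrt 2 - 2 * δ) / σ1 < ‖u - v‖ := by
    rw [div_lt_iff₀ hσ1]
    nlinarith
  have hpos : 0 < Real.sqrt 2 - 2 * δ := by
    have h2 : (0:ℝ) < Real.sqrt 2 := Real.sqrt_pos.2 (by norm_num)
    linarith
  have hdsq : ((Real.sqrt 2 - 2 * δ) / σ1) ^ 2 < ‖u - v‖ ^ 2 := by
    apply sq_lt_sq' _ hd
    have : 0 ≤ (Real.sqrt 2 - 2 * δ) / σ1 := by positivity
    linarith [norm_nonneg (u - v)]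
  have hnsq : ‖u - v‖ ^ 2 = 2 - 2 * ⟪u, v⟫ := by
    rw [norm_sub_sq_real, hu, hv]; ring
  have hdivsq : ((Real.sqrt 2 - 2 * δ) / σ1) ^ 2
      = (Real.sqrt 2 - 2 * δ) ^ 2 / σ1 ^ 2 := by
    rw [div_pow]
  rw [hdivsq, hnsq] at hdsq
  have hσ1sq : (0:ℝ) < σ1 ^ 2 := by positivity
  rw [div_lt_iff₀ hσ1sq] at hdsq
  have : (Real.sqrt 2 - 2 * δ) ^ 2 / (2 * σ1 ^ 2) < 1 - ⟪u, v⟫ := by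
    rw [div_lt_iff₀ (by positivity)]
    nlinarith
  linarith
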